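/- Let G be a connected simple graph on the finite vertex set V, let L be its Laplacian matrix, and let S be a nonempty proper subset of V such that the subgraph of G induced on S is connected. Let C_S = (L i j)_{i,j ∈ S} be the diagonal block of L associated with S and let Y_S = (L i j)_{i ∈ S, j ∉ S} be the bridge matrix of S. Then rank(Y_S) ≤ rank(C_S) and rank(C_S) − rank(Y_S) < |S|; equivalently, the degree of freedom δ(C_S, Y_S) = rank(C_S) − rank(Y_S) satisfies 0 ≤ δ(C_S, Y_S) < |S|. -/

import Mathlib

open Matrix

private lemma sum_split_aux {V : Type*} [Fintype V] (S : Set V) [DecidablePred (· ∈ S)]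
    (f : V → ℝ) :
    ∑ v, f v = (∑ i : S, f i) + ∑ j : {j : V // j ∉ S}, f j := by
  rw [← Equiv.sum_comp (Equiv.sumCompl (· ∈ S)) f, Fintype.sum_sum_type]
  rfl

/-- **Proposition (degrees of freedom bounds).** Let `G` be a connected simple graph
on a finite vertex set `V` with Laplacian `L`, and let `S` be a nonempty proper subset
of `V` whose induced subgraph is connected. With `C_S = (L i j)_{i,j ∈ S}` the diagonal
block and `Y_S = (L i j)_{i ∈ S, j ∉ S}` the bridge matrix, the degree of freedom
`δ(C_S, Y_S) = rank C_S - rank Y_S` satisfies `0 ≤ δ(C_S, Y_S) < |S|`; that is,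
`rank Y_S ≤ rank C_S` and `rank C_S - rank Y_S < |S|`. -/
theorem dof_bounds {V : Type*} [Fintype V] [DecidableEq V]
    (G : SimpleGraph V) [DecidableRel G.Adj] (hG : G.Connected)
    (S : Set V) [DecidablePred (· ∈ S)]
    (hS : S.Nonempty) (hSproper : S ≠ Set.univ)
    (hconn : (G.induce S).Connected) :
    ((G.lapMatrix ℝ).submatrix (Subtype.val : S → V)
        (fun j : {j : V // j ∉ S} => (j : V))).rank ≤
      ((G.lapMatrix ℝ).submatrix (Subtype.val : S → V) (Subtype.val : S → V)).rank ∧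
    ((G.lapMatrix ℝ).submatrix (Subtype.val : S → V) (Subtype.val : S → V)).rank -
      ((G.lapMatrix ℝ).submatrix (Subtype.val : S → V)
        (fun j : {j : V // j ∉ S} => (j : V))).rank < Fintype.card S := by
  classical
  set L := G.lapMatrix ℝ with hL
  set C := L.submatrix (Subtype.val : S → V) (Subtype.val : S → V) with hC
  set Y := L.submatrix (Subtype.val : S → V)
      (fun j : {j : V // j ∉ S} => (j : V)) with hY
  -- there is a vertex outside S
  obtain ⟨b, hb⟩ : ∃ b, b ∉ S := by
    by_contra h
    push_neg at h
    exact hSproper (Set.eq_univ_of_forall h)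
  obtain ⟨a, ha⟩ := hS
  -- C is invertible
  have hCunit : IsUnit C := by
    rw [← Matrix.mulVec_injective_iff_isUnit]
    have hker : ∀ x, C *ᵥ x = 0 → x = 0 := by
      intro x hx
      set y : V → ℝ := fun v => if h : v ∈ S then x ⟨v, h⟩ else 0 with hy'
      have hyS : ∀ i : S, y i = x i := fun i => by simp [hy', i.2]
      have hyC : ∀ j : V, j ∉ S → y j = 0 := fun j hj => by simp [hy', hj]
      have hLy : ∀ v : V, (L *ᵥ y) v = ∑ j : S, L v j * x j := by
        intro v
        show ∑ w, L v w * y w = _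
        rw [sum_split_aux S (fun w => L v w * y w)]
        have h1 : ∑ j : {j : V // j ∉ S}, L v j * y j = 0 :=
          Finset.sum_eq_zero fun j _ => by rw [hyC j j.2, mul_zero]
        rw [h1, add_zero]
        exact Finset.sum_congr rfl fun i _ => by rw [hyS i]
      have hquad : Matrix.toLinearMap₂' ℝ L y y = 0 := by
        rw [Matrix.toLinearMap₂'_apply']
        show y ⬝ᵥ L *ᵥ y = 0
        unfold dotProduct
        rw [sum_split_aux S (fun v => y v * (L *ᵥ y) v)]
        have h1 : ∑ j : {j : V // j ∉ S}, y j * (L *ᵥ y) j = 0 :=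
          Finset.sum_eq_zero fun j _ => by rw [hyC j j.2, zero_mul]
        rw [h1, add_zero]
        have h2 : ∀ i : S, y i * (L *ᵥ y) i = x i * (C *ᵥ x) i := by
          intro i
          rw [hyS i, hLy i]
          congr 1
        rw [Finset.sum_congr rfl fun i _ => h2 i, hx]
        simp
      have hconst := (G.lapMatrix_toLinearMap₂'_apply'_eq_zero_iff_forall_reachable y).mp
        hquad
      funext i
      have : y i = y b := hconst i b (hG.preconnected i b)
      rw [hyC b hb] at this
      rw [← hyS i] at *
      simpa using this
    intro u v huv
    have : C *ᵥ (u - v) = 0 := by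
      rw [Matrix.mulVec_sub, huv, sub_self]
    have := hker _ this
    exact sub_eq_zero.mp this
  have hrankC : C.rank = Fintype.card S := Matrix.rank_of_isUnit C hCunit
  -- there is a boundary edge, so Y ≠ 0 and rank Y ≥ 1
  obtain ⟨w⟩ := hG.preconnected a b
  obtain ⟨d, _, hd1, hd2⟩ := w.exists_boundary_dart S ha hb
  have hadj : G.Adj d.fst d.snd := d.adj
  have hne : d.fst ≠ d.snd := hadj.ne
  have hYentry : Y ⟨d.fst, hd1⟩ ⟨d.snd, hd2⟩ = -1 := by
    show L d.fst d.snd = -1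
    simp [hL, SimpleGraph.lapMatrix, SimpleGraph.degMatrix, Matrix.diagonal_apply_ne _ hne,
      hadj]
  have hrankY : 1 ≤ Y.rank := by
    by_contra h
    push_neg at h
    interval_cases hYr : Y.rank
    have hbot : LinearMap.range Y.mulVecLin = ⊥ := by
      have := hYr
      unfold Matrix.rank at this
      exact Submodule.finrank_eq_zero.mp this
    have hml : Y.mulVecLin = 0 := LinearMap.range_eq_bot.mp hbot
    have : Y.mulVecLin (Pi.single ⟨d.snd, hd2⟩ 1) = 0 := by rw [hml]; rfl
    have hz := congrFun this ⟨d.fst, hd1⟩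
    rw [Matrix.mulVecLin_apply, Matrix.mulVec_single] at hz
    simp only [Pi.smul_apply, MulOpposite.op_one, one_smul, Matrix.col_apply, mul_one, Pi.zero_apply] at hz
    rw [hYentry] at hz
    norm_num at hz
  have hrankYle : Y.rank ≤ Fintype.card S := Matrix.rank_le_card_height Y
  have hScard : 1 ≤ Fintype.card S := Fintype.card_pos_iff.mpr ⟨⟨a, ha⟩⟩
  constructor
  · rw [hrankC]; exact hrankYle
  · rw [hrankC]; omega
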